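/- Let G be a finite nilpotent group of nilpotency class 2, i.e. G is nonabelian and the quotient G/Z(G) of G by its center is abelian. Then every irreducible unitary representation of G on a nontrivial finite-dimensional complex Hilbert space does phase retrieval. -/

import Mathlib

set_option linter.unusedSectionVars false
set_option maxHeartbeats 1000000

def DoesPhaseRetrieval {H : Type*} [NormedAddCommGroup H] [InnerProductSpace ℂ H]
    {I : Type*} (x : I → H) : Prop :=
  ∀ f g : H, (∀ i : I, ‖(inner ℂ f (x i) : ℂ)‖ = ‖(inner ℂ g (x i) : ℂ)‖) →
    ∃ c : ℂ, ‖c‖ = 1 ∧ f = c • g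

section PRAux

variable {G : Type*} [Group G] [Finite G]
variable {H : Type*} [NormedAddCommGroup H] [InnerProductSpace ℂ H]
  [FiniteDimensional ℂ H] [Nontrivial H]
variable (π : G →* (H ≃ₗᵢ[ℂ] H))

private lemma PR.pi_mul (a b : G) (v : H) : π (a * b) v = π a (π b v) := by
  rw [map_mul]; rfl

private lemma PR.pi_one (v : H) : π 1 v = v := by rw [map_one]; rfl

private lemma PR.pi_inv (a : G) (v : H) : π a⁻¹ (π a v) = v := by
  rw [← PR.pi_mul, inv_mul_cancel, PR.pi_one]

private lemma PR.pi_inv' (a : G) (v : H) : π a (π a⁻¹ v) = v := by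
  rw [← PR.pi_mul, mul_inv_cancel, PR.pi_one]

private lemma PR.pi_ne_zero {v : H} (hv : v ≠ 0) (a : G) : π a v ≠ 0 := by
  intro h
  apply hv
  have := (π a).norm_map v
  rw [h, norm_zero] at this
  exact norm_eq_zero.mp this.symm

private lemma PR.smul_cancel {c c' : ℂ} {x : H} (hx : x ≠ 0) (h : c • x = c' • x) :
    c = c' := by
  have h2 : (c - c') • x = 0 := by rw [sub_smul, h, sub_self]
  rcases smul_eq_zero.mp h2 with h3 | h3
  · exact sub_eq_zero.mp h3
  · exact absurd h3 hx

private lemma PR.schur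
    (hirr : ∀ V : Submodule ℂ H, (∀ g : G, ∀ v ∈ V, π g v ∈ V) → V = ⊥ ∨ V = ⊤)
    (T : H →ₗ[ℂ] H) (hT : ∀ (g : G) (v : H), T (π g v) = π g (T v)) :
    ∃ c : ℂ, ∀ v : H, T v = c • v := by
  obtain ⟨c, hc⟩ := Module.End.exists_eigenvalue (K := ℂ) (V := H) T
  refine ⟨c, fun v => ?_⟩
  have hV : ∀ g : G, ∀ w ∈ Module.End.eigenspace T c, π g w ∈ Module.End.eigenspace T c := by
    intro g w hw
    rw [Module.End.mem_eigenspace_iff] at hw ⊢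
    rw [show T (π g w) = π g (T w) from hT g w, hw, map_smul]
  rcases hirr _ hV with h | h
  · exact absurd h hc
  · have hv : v ∈ Module.End.eigenspace T c := h ▸ Submodule.mem_top
    exact Module.End.mem_eigenspace_iff.mp hv

private lemma PR.comm_central (hclass2 : ∀ a b : G ⧸ Subgroup.center G, a * b = b * a)
    (a b : G) : a * b * (b * a)⁻¹ ∈ Subgroup.center G := by
  have h := hclass2 (a : G ⧸ Subgroup.center G) (b : G ⧸ Subgroup.center G)
  rw [← QuotientGroup.mk_mul, ← QuotientGroup.mk_mul, QuotientGroup.eq] at h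
  have h2 := Subgroup.Normal.conj_mem inferInstance _
    ((Subgroup.center G).inv_mem h) (a * b)
  convert h2 using 1
  group

private lemma PR.key_inj
    (hclass2 : ∀ a b : G ⧸ Subgroup.center G, a * b = b * a)
    (hirr : ∀ V : Submodule ℂ H, (∀ g : G, ∀ v ∈ V, π g v ∈ V) → V = ⊥ ∨ V = ⊤)
    {η : H} (hη : ∀ h : G, (inner ℂ η (π h η) : ℂ) ≠ 0)
    (T : H →ₗ[ℂ] H) (hT : ∀ g : G, (inner ℂ (π g η) (T (π g η)) : ℂ) = 0) :
    T = 0 := by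
  classical
  letI : Fintype G := Fintype.ofFinite G
  obtain ⟨v₀, hv₀⟩ := exists_ne (0 : H)
  -- the linear-map version of π
  set ρ : G → H →ₗ[ℂ] H := fun g => (π g).toLinearEquiv.toLinearMap with hρdef
  have hρ : ∀ (g : G) (v : H), ρ g v = π g v := fun g v => rfl
  -- the commutator cocycle ω
  have key : ∀ a b : G, ∃ c : ℂ, ∀ v : H, π (a * b) v = c • π (b * a) v := by
    intro a b
    have hz := PR.comm_central hclass2 a b
    have hcomm : ∀ (g : G) (v : H), ρ (a * b * (b * a)⁻¹) (π g v) = π g (ρ (a * b * (b * a)⁻¹) v) := by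
      intro g v
      rw [hρ, hρ, ← PR.pi_mul, ← PR.pi_mul, Subgroup.mem_center_iff.mp hz g]
    obtain ⟨c, hc⟩ := PR.schur π hirr _ hcomm
    refine ⟨c, fun v => ?_⟩
    have h1 : π (a * b * (b * a)⁻¹) (π (b * a) v) = c • π (b * a) v := hc (π (b * a) v)
    rw [← PR.pi_mul] at h1
    rw [show a * b * (b * a)⁻¹ * (b * a) = a * b by group] at h1
    exact h1
  choose ω hω using key
  -- basic properties of ω
  have hω1 : ∀ b : G, ω 1 b = 1 := by
    intro b
    have h := hω 1 b v₀
    rw [one_mul, mul_one] at h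
    have h2 : ω 1 b • π b v₀ = (1 : ℂ) • π b v₀ := by rw [one_smul]; exact h.symm
    exact PR.smul_cancel (PR.pi_ne_zero π hv₀ b) h2
  have hωmull : ∀ a a' b : G, ω (a * a') b = ω a b * ω a' b := by
    intro a a' b
    have h1 : π (a * a' * b) v₀ = ω (a * a') b • π (b * (a * a')) v₀ := hω (a * a') b v₀
    have h2 : π (a * a' * b) v₀ = (ω a b * ω a' b) • π (b * (a * a')) v₀ := by
      calc π (a * a' * b) v₀
          = π a (π (a' * b) v₀) := by
            rw [show a * a' * b = a * (a' * b) by group, PR.pi_mul]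
        _ = π a (ω a' b • π (b * a') v₀) := by rw [hω a' b v₀]
        _ = ω a' b • π a (π (b * a') v₀) := by rw [map_smul]
        _ = ω a' b • π (a * b) (π a' v₀) := by
            rw [← PR.pi_mul, show a * (b * a') = a * b * a' by group, PR.pi_mul]
        _ = ω a' b • (ω a b • π (b * a) (π a' v₀)) := by rw [hω a b (π a' v₀)]
        _ = (ω a b * ω a' b) • π (b * (a * a')) v₀ := by
            rw [← PR.pi_mul, show b * a * a' = b * (a * a') by group, smul_smul,
              mul_comm (ω a' b)]
    exact PR.smul_cancel (PR.pi_ne_zero π hv₀ _) (h1.symm.trans h2)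
  have hωmulr : ∀ a b b' : G, ω a (b * b') = ω a b * ω a b' := by
    intro a b b'
    have h1 : π (a * (b * b')) v₀ = ω a (b * b') • π (b * b' * a) v₀ := hω a (b * b') v₀
    have h2 : π (a * (b * b')) v₀ = (ω a b * ω a b') • π (b * b' * a) v₀ := by
      calc π (a * (b * b')) v₀
          = π (a * b) (π b' v₀) := by
            rw [show a * (b * b') = a * b * b' by group, PR.pi_mul]
        _ = ω a b • π (b * a) (π b' v₀) := hω a b (π b' v₀)
        _ = ω a b • π b (π (a * b') v₀) := by
            rw [← PR.pi_mul, show b * a * b' = b * (a * b') by group, PR.pi_mul]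
        _ = ω a b • π b (ω a b' • π (b' * a) v₀) := by rw [hω a b' v₀]
        _ = (ω a b * ω a b') • π (b * b' * a) v₀ := by
            rw [map_smul, ← PR.pi_mul, show b * (b' * a) = b * b' * a by group, smul_smul]
    exact PR.smul_cancel (PR.pi_ne_zero π hv₀ _) (h1.symm.trans h2)
  have hωinvmul : ∀ a b : G, ω a b * ω a⁻¹ b = 1 := by
    intro a b
    rw [← hωmull, mul_inv_cancel, hω1]
  have hωne : ∀ a b : G, ω a b ≠ 0 := fun a b => left_ne_zero_of_mul_eq_one (hωinvmul a b)
  have hωinvl : ∀ a b : G, ω a⁻¹ b = (ω a b)⁻¹ := fun a b =>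
    eq_inv_of_mul_eq_one_left (by rw [mul_comm]; exact hωinvmul a b)
  have hω1r : ∀ a : G, ω a 1 = 1 := by
    intro a
    have h := hωmulr a 1 1
    rw [one_mul] at h
    have h2 : ω a 1 * 1 = ω a 1 * ω a 1 := by rw [mul_one]; exact h
    exact (mul_left_cancel₀ (hωne a 1) h2).symm
  have hωinvr : ∀ a b : G, ω a b⁻¹ = (ω a b)⁻¹ := by
    intro a b
    have h := hωmulr a b b⁻¹
    rw [mul_inv_cancel, hω1r] at h
    exact eq_inv_of_mul_eq_one_left (by rw [mul_comm]; exact h.symm)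
  have hωself : ∀ a : G, ω a a = 1 := by
    intro a
    have h := hω a a v₀
    have h2 : ω a a • π (a * a) v₀ = (1 : ℂ) • π (a * a) v₀ := by rw [one_smul]; exact h.symm
    exact PR.smul_cancel (PR.pi_ne_zero π hv₀ _) h2
  -- the averaged operators E h = ∑ g, ω g h • π g⁻¹ ∘ T ∘ π g
  set E : G → H →ₗ[ℂ] H := fun h => ∑ g : G, ω g h • ((ρ g⁻¹).comp (T.comp (ρ g))) with hEdef
  have hEapply : ∀ (h : G) (v : H), E h v = ∑ g : G, ω g h • π g⁻¹ (T (π g v)) := by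
    intro h v
    rw [hEdef]
    simp [LinearMap.sum_apply, LinearMap.smul_apply, LinearMap.comp_apply, hρ]
  -- twisted equivariance of E h
  have hEeq : ∀ (h k : G) (v : H), ω k h • E h (π k v) = π k (E h v) := by
    intro h k v
    rw [hEapply, hEapply, Finset.smul_sum, map_sum]
    refine Eq.symm (Fintype.sum_equiv (Equiv.mulRight k⁻¹) _ _ ?_)
    intro x
    simp only [Equiv.coe_mulRight]
    rw [← PR.pi_mul π (x * k⁻¹) k v, show x * k⁻¹ * k = x by group,
      show (x * k⁻¹)⁻¹ = k * x⁻¹ by group, PR.pi_mul π k x⁻¹, map_smul, smul_smul]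
    congr 1
    rw [hωmull, hωinvl, mul_comm (ω x h), ← mul_assoc, mul_inv_cancel₀ (hωne k h), one_mul]
  have hEeq' : ∀ (h m : G) (v : H), E h (π m v) = (ω m h)⁻¹ • π m (E h v) := by
    intro h m v
    rw [← hEeq h m v, smul_smul, inv_mul_cancel₀ (hωne m h), one_smul]
  -- each E h is a scalar multiple of π h (Schur)
  have hF : ∀ h : G, ∃ c : ℂ, ∀ v : H, E h v = c • π h v := by
    intro h
    have hcomm : ∀ (k : G) (v : H),
        ((E h).comp (ρ h⁻¹)) (π k v) = π k (((E h).comp (ρ h⁻¹)) v) := by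
      intro k v
      simp only [LinearMap.comp_apply, hρ]
      calc E h (π h⁻¹ (π k v))
          = E h (π (h⁻¹ * k) v) := by rw [← PR.pi_mul]
        _ = (ω (h⁻¹ * k) h)⁻¹ • π (h⁻¹ * k) (E h v) := hEeq' h (h⁻¹ * k) v
        _ = (ω k h)⁻¹ • π (h⁻¹ * k) (E h v) := by
            rw [hωmull, hωinvl, hωself, inv_one, one_mul]
        _ = π k (E h (π h⁻¹ v)) := by
            rw [hEeq' h h⁻¹ v, hωinvl, hωself, inv_one, inv_one, one_smul, ← PR.pi_mul,
              hω k h⁻¹ (E h v), hωinvr]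
    obtain ⟨c, hc⟩ := PR.schur π hirr ((E h).comp (ρ h⁻¹)) hcomm
    refine ⟨c, fun v => ?_⟩
    have h2 := hc (π h v)
    simp only [LinearMap.comp_apply, hρ] at h2
    rwa [PR.pi_inv] at h2
  choose cE hcE using hF
  -- the scalars cE h all vanish, by the hypothesis on T and on η
  have hc0 : ∀ h : G, cE h = 0 := by
    intro h
    have hinner : (inner ℂ η (E h η) : ℂ) = 0 := by
      rw [hEapply, inner_sum]
      refine Finset.sum_eq_zero fun g _ => ?_
      rw [inner_smul_right]
      have h3 := LinearIsometryEquiv.inner_map_map (π g) η (π g⁻¹ (T (π g η)))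
      rw [PR.pi_inv'] at h3
      rw [← h3, hT g, mul_zero]
    rw [hcE h η, inner_smul_right] at hinner
    rcases mul_eq_zero.mp hinner with h4 | h4
    · exact h4
    · exact absurd h4 (hη h)
  -- now sum over all h and conclude T = 0
  ext v
  rw [LinearMap.zero_apply]
  have hsum0 : ∑ h : G, E h v = 0 :=
    Finset.sum_eq_zero fun h _ => by rw [hcE h v, hc0 h, zero_smul]
  have hswap : ∑ h : G, E h v = ∑ g : G, (∑ h : G, ω g h) • π g⁻¹ (T (π g v)) := by
    simp_rw [hEapply]
    rw [Finset.sum_comm]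
    exact Finset.sum_congr rfl fun g _ => (Finset.sum_smul).symm
  have hterm : ∀ g : G, (∑ h : G, ω g h) • π g⁻¹ (T (π g v))
      = if ∀ h : G, ω g h = 1 then (Fintype.card G : ℂ) • T v else 0 := by
    intro g
    by_cases hg : ∀ h : G, ω g h = 1
    · rw [if_pos hg]
      have h5 : (∑ h : G, ω g h) = (Fintype.card G : ℂ) := by
        rw [Finset.sum_congr rfl fun h _ => hg h, Finset.sum_const, nsmul_eq_mul, mul_one]
        rfl
      rw [h5]
      congr 1
      -- π g is a scalar, so conjugation by it fixes T
      have hcommg : ∀ (k : G) (w : H), ρ g (π k w) = π k (ρ g w) := by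
        intro k w
        rw [hρ, hρ, ← PR.pi_mul, ← PR.pi_mul, hω g k w, hg k, one_smul]
      obtain ⟨c, hc⟩ := PR.schur π hirr (ρ g) hcommg
      have hcg : ∀ w : H, π g w = c • w := fun w => hc w
      have hcne : c ≠ 0 := by
        intro h0
        have h6 := hcg v₀
        rw [h0, zero_smul] at h6
        exact (PR.pi_ne_zero π hv₀ g) h6
      have hinv : ∀ x : H, π g⁻¹ x = c⁻¹ • x := by
        intro x
        have h6 : π g (π g⁻¹ x) = x := PR.pi_inv' π g x
        rw [hcg] at h6
        have h7 : c⁻¹ • (c • π g⁻¹ x) = c⁻¹ • x := by rw [h6]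
        rwa [smul_smul, inv_mul_cancel₀ hcne, one_smul] at h7
      rw [hcg v, map_smul, hinv, smul_smul, inv_mul_cancel₀ hcne, one_smul]
    · rw [if_neg hg]
      push_neg at hg
      obtain ⟨h₀, hh₀⟩ := hg
      have hsum : (∑ h : G, ω g h) = 0 := by
        have h7 : ω g h₀ * (∑ h : G, ω g h) = ∑ h : G, ω g h := by
          rw [Finset.mul_sum]
          refine Fintype.sum_equiv (Equiv.mulLeft h₀) _ _ ?_
          intro x
          simp only [Equiv.coe_mulLeft]
          rw [← hωmulr]
        have h8 : (ω g h₀ - 1) * (∑ h : G, ω g h) = 0 := by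
          calc (ω g h₀ - 1) * (∑ h : G, ω g h)
              = ω g h₀ * (∑ h : G, ω g h) - (∑ h : G, ω g h) := by ring
            _ = 0 := sub_eq_zero.mpr h7
        rcases mul_eq_zero.mp h8 with h9 | h9
        · exact absurd (sub_eq_zero.mp h9) hh₀
        · exact h9
      rw [hsum, zero_smul]
  rw [hswap, Finset.sum_congr rfl fun g _ => hterm g, Finset.sum_ite, Finset.sum_const,
    Finset.sum_const_zero, add_zero] at hsum0
  -- the filter is nonempty (contains 1)
  have h1mem : (1 : G) ∈ Finset.filter (fun g => ∀ h : G, ω g h = 1) Finset.univ := by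
    simp only [Finset.mem_filter, Finset.mem_univ, true_and]
    exact hω1
  have hcard : ((Finset.filter (fun g => ∀ h : G, ω g h = 1) Finset.univ).card : ℂ) ≠ 0 := by
    rw [Nat.cast_ne_zero]
    exact Finset.card_ne_zero_of_mem h1mem
  rw [← Nat.cast_smul_eq_nsmul ℂ, smul_smul] at hsum0
  rcases smul_eq_zero.mp hsum0 with h10 | h10
  · exact absurd h10 (mul_ne_zero hcard (Nat.cast_ne_zero.mpr Fintype.card_ne_zero))
  · exact h10

private lemma PR.exists_eta : ∃ η : H, ∀ h : G, (inner ℂ η (π h η) : ℂ) ≠ 0 := by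
  obtain ⟨v₀, hv₀⟩ := exists_ne (0 : H)
  by_contra hcon
  push_neg at hcon
  have hcover : ⋃ h : G, {η : H | (inner ℂ η (π h η) : ℂ) = 0} = Set.univ := by
    ext η
    simp only [Set.mem_iUnion, Set.mem_univ, iff_true, Set.mem_setOf_eq]
    exact hcon η
  have hclosed : ∀ h : G, IsClosed {η : H | (inner ℂ η (π h η) : ℂ) = 0} := by
    intro h
    have hcont : Continuous fun η : H => (inner ℂ η (π h η) : ℂ) :=
      Continuous.inner continuous_id ((π h).continuous.comp continuous_id)
    exact isClosed_eq hcont continuous_const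
  obtain ⟨h, hint⟩ := nonempty_interior_of_iUnion_of_closed hclosed hcover
  obtain ⟨x₀, hx₀⟩ := hint
  rw [mem_interior_iff_mem_nhds, Metric.mem_nhds_iff] at hx₀
  obtain ⟨ε, hε, hball⟩ := hx₀
  have hq : ∀ d : H, (inner ℂ d (π h d) : ℂ) = 0 := by
    intro d
    by_cases hd : d = 0
    · rw [hd]; simp
    · have hdn : (0 : ℝ) < ‖d‖ := norm_pos_iff.mpr hd
      set t : ℝ := ε / (2 * ‖d‖) with ht
      have htpos : 0 < t := div_pos hε (by positivity)
      set w : H := (t : ℂ) • d with hw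
      have hnw : ‖w‖ = ε / 2 := by
        rw [hw, norm_smul, Complex.norm_real, Real.norm_eq_abs, abs_of_pos htpos, ht]
        field_simp
      have hwlt : ‖w‖ < ε := by rw [hnw]; linarith
      have e0 : (inner ℂ x₀ (π h x₀) : ℂ) = 0 := hball (Metric.mem_ball_self hε)
      have e1 : (inner ℂ (x₀ + w) (π h (x₀ + w)) : ℂ) = 0 := by
        refine hball ?_
        rw [Metric.mem_ball, dist_eq_norm, add_sub_cancel_left]
        exact hwlt
      have e2 : (inner ℂ (x₀ - w) (π h (x₀ - w)) : ℂ) = 0 := by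
        refine hball ?_
        rw [Metric.mem_ball, dist_eq_norm, sub_sub_cancel_left, norm_neg]
        exact hwlt
      simp only [map_add, map_sub, inner_add_left, inner_add_right, inner_sub_left,
        inner_sub_right] at e1 e2
      have e3 : (2 : ℂ) * (inner ℂ w (π h w) : ℂ) = 0 := by linear_combination e1 + e2 - 2 * e0
      have e4 : (inner ℂ w (π h w) : ℂ) = 0 := by
        rcases mul_eq_zero.mp e3 with h' | h'
        · norm_num at h'
        · exact h'
      rw [hw, map_smul, inner_smul_left, inner_smul_right, Complex.conj_ofReal] at e4
      have htne : ((t : ℂ)) ≠ 0 := by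
        simp only [ne_eq, Complex.ofReal_eq_zero]
        exact ne_of_gt htpos
      rcases mul_eq_zero.mp e4 with h' | h'
      · exact absurd h' htne
      · rcases mul_eq_zero.mp h' with h'' | h''
        · exact absurd h'' htne
        · exact h''
  have hzero : ((π h).toLinearEquiv.toLinearMap : H →ₗ[ℂ] H) = 0 := by
    rw [← inner_map_self_eq_zero]
    intro x
    have := hq x
    rw [← inner_conj_symm] at this
    have h2 := congrArg (starRingEnd ℂ) this
    simpa using h2
  have : π h v₀ = 0 := by
    have := LinearMap.congr_fun hzero v₀
    simpa using this
  exact (PR.pi_ne_zero π hv₀ h) this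

end PRAux

private noncomputable def PR.outer {H : Type*} [NormedAddCommGroup H] [InnerProductSpace ℂ H]
    (u : H) : H →ₗ[ℂ] H where
  toFun x := (inner ℂ u x : ℂ) • u
  map_add' x y := by rw [inner_add_right, add_smul]
  map_smul' c x := by
    rw [inner_smul_right, smul_smul, RingHom.id_apply]

/-- Every irreducible unitary representation of a finite nilpotent group of nilpotency
class 2 (i.e. a nonabelian group `G` with `G/Z(G)` abelian) on a nontrivial
finite-dimensional complex Hilbert space does phase retrieval. -/
theorem phase_retrieval_class_two_nilpotent
    {G : Type*} [Group G] [Finite G]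
    (hna : ¬ ∀ a b : G, a * b = b * a)
    (hclass2 : ∀ a b : G ⧸ Subgroup.center G, a * b = b * a)
    {H : Type*} [NormedAddCommGroup H] [InnerProductSpace ℂ H]
    [FiniteDimensional ℂ H] [Nontrivial H]
    (π : G →* (H ≃ₗᵢ[ℂ] H))
    (hirr : ∀ V : Submodule ℂ H, (∀ g : G, ∀ v ∈ V, π g v ∈ V) → V = ⊥ ∨ V = ⊤) :
    ∃ η : H, DoesPhaseRetrieval (fun g : G => π g η) := by
  obtain ⟨η, hη⟩ := PR.exists_eta π
  refine ⟨η, ?_⟩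
  intro f f' hff'
  -- the difference of outer products
  set T : H →ₗ[ℂ] H := PR.outer f - PR.outer f' with hTdef
  have houterapp : ∀ (u x : H), PR.outer u x = (inner ℂ u x : ℂ) • u := fun u x => rfl
  have hT : ∀ k : G, (inner ℂ (π k η) (T (π k η)) : ℂ) = 0 := by
    intro k
    have h1 := hff' k
    simp only at h1
    rw [hTdef]
    set x : H := π k η
    rw [LinearMap.sub_apply, inner_sub_right, houterapp, houterapp,
      inner_smul_right, inner_smul_right, ← inner_conj_symm x f, ← inner_conj_symm x f']
    have key : ∀ z w : ℂ, ‖z‖ = ‖w‖ → z * (starRingEnd ℂ) z = w * (starRingEnd ℂ) w := by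
      intro z w hzw
      rw [Complex.mul_conj, Complex.mul_conj]
      congr 1
      rw [Complex.normSq_eq_norm_sq, Complex.normSq_eq_norm_sq, hzw]
    rw [key _ _ h1, sub_self]
  have hT0 : T = 0 := PR.key_inj π hclass2 hirr hη T hT
  have houter : ∀ x : H, (inner ℂ f x : ℂ) • f = (inner ℂ f' x : ℂ) • f' := by
    intro x
    have := LinearMap.congr_fun hT0 x
    rw [hTdef, LinearMap.sub_apply, LinearMap.zero_apply, sub_eq_zero] at this
    exact this
  by_cases hf' : f' = 0
  · subst hf'
    have hf : f = 0 := by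
      by_contra hf
      have h2 := houter f
      simp only [inner_zero_left, zero_smul] at h2
      exact (smul_ne_zero (inner_self_ne_zero.mpr hf) hf) h2
    subst hf
    exact ⟨1, by simp⟩
  · have hf : f ≠ 0 := by
      intro hf0
      have h2 := houter f'
      rw [hf0] at h2
      simp only [inner_zero_left, zero_smul, inner_zero_right, smul_zero] at h2
      exact (smul_ne_zero (inner_self_ne_zero.mpr hf') hf') h2.symm
    set c : ℂ := (inner ℂ f' f : ℂ) / (inner ℂ f f : ℂ) with hc
    have h2 : (inner ℂ f f : ℂ) • f = (inner ℂ f' f : ℂ) • f' := houter f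
    have hfc : f = c • f' := by
      rw [hc, div_eq_mul_inv, mul_comm, mul_smul, ← h2, smul_smul,
        inv_mul_cancel₀ (inner_self_ne_zero.mpr hf), one_smul]
    refine ⟨c, ?_, hfc⟩
    -- plug back into houter f'
    have h3 : (inner ℂ f f' : ℂ) • f = (inner ℂ f' f' : ℂ) • f' := houter f'
    rw [hfc, inner_smul_left] at h3
    rw [smul_smul] at h3
    have h4 : ((starRingEnd ℂ) c * (inner ℂ f' f' : ℂ) * c) • f' = (inner ℂ f' f' : ℂ) • f' := h3
    have h5 : (starRingEnd ℂ) c * (inner ℂ f' f' : ℂ) * c = (inner ℂ f' f' : ℂ) :=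
      PR.smul_cancel hf' h4
    have h6 : c * (starRingEnd ℂ) c = 1 := by
      have h7 : (c * (starRingEnd ℂ) c) * (inner ℂ f' f' : ℂ) = 1 * (inner ℂ f' f' : ℂ) := by
        rw [one_mul]
        linear_combination h5
      exact mul_right_cancel₀ (inner_self_ne_zero.mpr hf') h7
    rw [Complex.mul_conj] at h6
    have h8 : Complex.normSq c = 1 := by exact_mod_cast h6
    have h9 : ‖c‖ ^ 2 = 1 := by
      rw [← Complex.normSq_eq_norm_sq, h8]
    nlinarith [norm_nonneg c, h9]
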